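/- For a bivariate Gaussian vector (Z_1, Z_2) with correlation ρ, Kendall's tau satisfies ρ_τ = (2/π) arcsin(ρ); equivalently, ρ = sin(π ρ_τ / 2). -/

import Mathlib

open MeasureTheory ProbabilityTheory Real intervalIntegral
open scoped NNReal ENNReal

namespace KendallAux

lemma abs_sign_le (x : ℝ) : |Real.sign x| ≤ 1 := by
  rcases Real.sign_apply_eq x with h | h | h <;> rw [h] <;> norm_num


lemma measurable_sign : Measurable (Real.sign) := by
  have : Real.sign = fun r : ℝ => if r < 0 then (-1:ℝ) else if 0 < r then 1 else 0 := by
    funext r; rfl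
  rw [this]
  exact Measurable.ite (measurableSet_lt measurable_id measurable_const) measurable_const
    (Measurable.ite (measurableSet_lt measurable_const measurable_id) measurable_const
      measurable_const)


lemma sign_pos_mul {c : ℝ} (hc : 0 < c) (x : ℝ) : Real.sign (c * x) = Real.sign x := by
  rcases lt_trichotomy x 0 with h | h | h
  · rw [Real.sign_of_neg h, Real.sign_of_neg (mul_neg_of_pos_of_neg hc h)]
  · simp [h]
  · rw [Real.sign_of_pos h, Real.sign_of_pos (mul_pos hc h)]


lemma pdf_conv_ident (z x : ℝ) :
    gaussianPDFReal 0 1 x * gaussianPDFReal 0 1 (x - z)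
      = gaussianPDFReal 0 2 z * gaussianPDFReal (z/2) (1/2) x := by
  simp only [gaussianPDFReal]
  push_cast
  rw [mul_mul_mul_comm, mul_mul_mul_comm ((√(2*π*(2:ℝ)))⁻¹)]
  congr 1
  · rw [← mul_inv, ← mul_inv, ← Real.sqrt_mul (by positivity), ← Real.sqrt_mul (by positivity)]
    congr 2
    ring
  · rw [← Real.exp_add, ← Real.exp_add]
    congr 1
    ring


lemma conv_pdf (t : ℝ) :
    ∫⁻ x, gaussianPDF 0 1 x * gaussianPDF 0 1 (x - t) = gaussianPDF 0 2 t := by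
  have h : ∀ x, gaussianPDF 0 1 x * gaussianPDF 0 1 (x - t)
      = gaussianPDF 0 2 t * gaussianPDF (t/2) (1/2) x := by
    intro x
    simp only [gaussianPDF]
    rw [← ENNReal.ofReal_mul (gaussianPDFReal_nonneg _ _ _),
      ← ENNReal.ofReal_mul (gaussianPDFReal_nonneg _ _ _), pdf_conv_ident t x]
  simp_rw [h]
  rw [lintegral_const_mul _ (measurable_gaussianPDF _ _),
    lintegral_gaussianPDF_eq_one _ (by norm_num), mul_one]


lemma conv_gaussian :
    ((gaussianReal 0 1).prod (gaussianReal 0 1)).map (fun p : ℝ × ℝ => p.1 - p.2)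
      = gaussianReal 0 2 := by
  have h1 : gaussianReal 0 1 = volume.withDensity (gaussianPDF 0 1) :=
    gaussianReal_of_var_ne_zero 0 one_ne_zero
  ext s hs
  rw [Measure.map_apply (by fun_prop : Measurable fun p : ℝ × ℝ => p.1 - p.2) hs,
    Measure.prod_apply ((by fun_prop : Measurable fun p : ℝ × ℝ => p.1 - p.2) hs)]
  have step1 : ∀ x : ℝ, (gaussianReal 0 1) (Prod.mk x ⁻¹' ((fun p : ℝ × ℝ => p.1 - p.2) ⁻¹' s))
      = ∫⁻ z in s, gaussianPDF 0 1 (x - z) := by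
    intro x
    have hpre : (Prod.mk x ⁻¹' ((fun p : ℝ × ℝ => p.1 - p.2) ⁻¹' s))
        = (fun y => x - y) ⁻¹' s := rfl
    have hset : MeasurableSet ((fun y => x - y) ⁻¹' s) := (measurable_id.const_sub x) hs
    rw [hpre, h1, withDensity_apply _ hset]
    have hmp := (Measure.measurePreserving_sub_left (volume : Measure ℝ) x)
    calc ∫⁻ y in (fun y => x - y) ⁻¹' s, gaussianPDF 0 1 y
        = ∫⁻ y, ((fun y => x - y) ⁻¹' s).indicator (gaussianPDF 0 1) y := by
          rw [lintegral_indicator hset]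
      _ = ∫⁻ z, ((fun y => x - y) ⁻¹' s).indicator (gaussianPDF 0 1) (x - z) := by
          rw [← hmp.lintegral_comp ((measurable_gaussianPDF 0 1).indicator
            hset)]
      _ = ∫⁻ z, s.indicator (fun z => gaussianPDF 0 1 (x - z)) z := by
          congr 1; funext z
          by_cases hz : z ∈ s
          · rw [Set.indicator_of_mem (by simpa using hz), Set.indicator_of_mem hz]
          · rw [Set.indicator_of_notMem (by simpa using hz), Set.indicator_of_notMem hz]
      _ = ∫⁻ z in s, gaussianPDF 0 1 (x - z) := by
          rw [lintegral_indicator hs]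
  simp_rw [step1]
  have hmeas2 : Measurable (Function.uncurry fun x z => gaussianPDF 0 1 (x - z)) :=
    (measurable_gaussianPDF 0 1).comp (measurable_fst.sub measurable_snd)
  rw [h1, lintegral_withDensity_eq_lintegral_mul _ (measurable_gaussianPDF 0 1)
    (Measurable.lintegral_prod_right hmeas2)]
  simp only [Pi.mul_apply]
  have step2 : ∀ x : ℝ, gaussianPDF 0 1 x * ∫⁻ z in s, gaussianPDF 0 1 (x - z)
      = ∫⁻ z in s, gaussianPDF 0 1 x * gaussianPDF 0 1 (x - z) := by
    intro x
    exact (lintegral_const_mul (gaussianPDF 0 1 x) ((measurable_gaussianPDF 0 1).comp (measurable_id.const_sub x))).symm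
  simp_rw [step2]
  rw [lintegral_lintegral_swap (((measurable_gaussianPDF 0 1).comp measurable_fst).mul
    ((measurable_gaussianPDF 0 1).comp (measurable_fst.sub measurable_snd))).aemeasurable]
  simp_rw [conv_pdf]
  exact (gaussianReal_apply 0 (by norm_num) s).symm

lemma map_sub_gaussian {Ω : Type*} [MeasurableSpace Ω] (μ : Measure Ω) [IsProbabilityMeasure μ]
    {X Y : Ω → ℝ} (hX : Measurable X) (hY : Measurable Y) (h : IndepFun X Y μ)
    (hX1 : μ.map X = gaussianReal 0 1) (hY1 : μ.map Y = gaussianReal 0 1) :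
    μ.map (fun ω => X ω - Y ω) = gaussianReal 0 2 := by
  have hmap : μ.map (fun ω => (X ω, Y ω)) = (gaussianReal 0 1).prod (gaussianReal 0 1) := by
    rw [(indepFun_iff_map_prod_eq_prod_map_map hX.aemeasurable hY.aemeasurable).mp h, hX1, hY1]
  have : (fun ω => X ω - Y ω) = (fun p : ℝ × ℝ => p.1 - p.2) ∘ (fun ω => (X ω, Y ω)) := rfl
  rw [this, ← Measure.map_map (by fun_prop : Measurable fun p : ℝ × ℝ => p.1 - p.2) (hX.prodMk hY), hmap,
    conv_gaussian]

lemma intInt (α a b : ℝ) :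
    IntervalIntegrable (fun θ => Real.sign (Real.cos θ * Real.sin (θ + α))) volume a b := by
  have hm : Measurable (fun θ => Real.sign (Real.cos θ * Real.sin (θ + α))) :=
    measurable_sign.comp ((Real.continuous_cos.measurable).mul
      ((Real.continuous_sin.comp (continuous_id.add continuous_const)).measurable))
  rw [intervalIntegrable_iff]
  refine Integrable.mono' (g := fun _ => (1:ℝ))
    (integrableOn_const measure_Ioc_lt_top.ne)
    hm.aestronglyMeasurable.restrict ?_
  filter_upwards with θ using abs_sign_le _


lemma piece {f : ℝ → ℝ} {a b c : ℝ} (hab : a ≤ b) (h : ∀ θ ∈ Set.Ioo a b, f θ = c) :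
    ∫ θ in a..b, f θ = c * (b - a) := by
  rw [intervalIntegral.integral_of_le hab, MeasureTheory.integral_Ioc_eq_integral_Ioo,
    MeasureTheory.setIntegral_congr_fun measurableSet_Ioo h, MeasureTheory.setIntegral_const,
    Real.volume_real_Ioo_of_le hab, smul_eq_mul, mul_comm]


lemma angular_alpha {α : ℝ} (h0 : 0 ≤ α) (h1 : α ≤ π/2) :
    ∫ θ in (-π)..π, Real.sign (Real.cos θ * Real.sin (θ + α)) = 4 * α := by
  have hπ := Real.pi_pos
  have e1 : -π ≤ -(π/2) := by linarith
  have e2 : -(π/2) ≤ -α := by linarith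
  have e3 : -α ≤ π/2 := by linarith
  have e4 : (π/2 : ℝ) ≤ π - α := by linarith
  have e5 : π - α ≤ π := by linarith
  set f : ℝ → ℝ := fun θ => Real.sign (Real.cos θ * Real.sin (θ + α)) with hf
  have split : ∫ θ in (-π)..π, f θ = (∫ θ in (-π)..(-(π/2)), f θ) + (∫ θ in (-(π/2))..(-α), f θ)
      + (∫ θ in (-α)..(π/2), f θ) + (∫ θ in (π/2)..(π - α), f θ) + (∫ θ in (π - α)..π, f θ) := by
    rw [integral_add_adjacent_intervals (intInt α _ _) (intInt α _ _),
      integral_add_adjacent_intervals (intInt α _ _) (intInt α _ _),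
      integral_add_adjacent_intervals (intInt α _ _) (intInt α _ _),
      integral_add_adjacent_intervals (intInt α _ _) (intInt α _ _)]
  have p1 : ∫ θ in (-π)..(-(π/2)), f θ = 1 * (-(π/2) - (-π)) := by
    refine piece e1 (fun θ hθ => ?_)
    obtain ⟨hθ1, hθ2⟩ := hθ
    have hc : Real.cos θ < 0 := by
      rw [← Real.cos_neg]
      exact Real.cos_neg_of_pi_div_two_lt_of_lt (by linarith) (by linarith)
    have hs : Real.sin (θ + α) < 0 :=
      Real.sin_neg_of_neg_of_neg_pi_lt (by linarith) (by linarith)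
    exact Real.sign_of_pos (mul_pos_of_neg_of_neg hc hs)
  have p2 : ∫ θ in (-(π/2))..(-α), f θ = (-1) * (-α - (-(π/2))) := by
    refine piece e2 (fun θ hθ => ?_)
    obtain ⟨hθ1, hθ2⟩ := hθ
    have hc : 0 < Real.cos θ :=
      Real.cos_pos_of_mem_Ioo ⟨by linarith, by linarith⟩
    have hs : Real.sin (θ + α) < 0 :=
      Real.sin_neg_of_neg_of_neg_pi_lt (by linarith) (by linarith)
    exact Real.sign_of_neg (mul_neg_of_pos_of_neg hc hs)
  have p3 : ∫ θ in (-α)..(π/2), f θ = 1 * (π/2 - (-α)) := by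
    refine piece e3 (fun θ hθ => ?_)
    obtain ⟨hθ1, hθ2⟩ := hθ
    have hc : 0 < Real.cos θ :=
      Real.cos_pos_of_mem_Ioo ⟨by linarith, by linarith⟩
    have hs : 0 < Real.sin (θ + α) :=
      Real.sin_pos_of_pos_of_lt_pi (by linarith) (by linarith)
    exact Real.sign_of_pos (mul_pos hc hs)
  have p4 : ∫ θ in (π/2)..(π - α), f θ = (-1) * ((π - α) - π/2) := by
    refine piece e4 (fun θ hθ => ?_)
    obtain ⟨hθ1, hθ2⟩ := hθ
    have hc : Real.cos θ < 0 :=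
      Real.cos_neg_of_pi_div_two_lt_of_lt (by linarith) (by linarith)
    have hs : 0 < Real.sin (θ + α) :=
      Real.sin_pos_of_pos_of_lt_pi (by linarith) (by linarith)
    exact Real.sign_of_neg (mul_neg_of_neg_of_pos hc hs)
  have p5 : ∫ θ in (π - α)..π, f θ = 1 * (π - (π - α)) := by
    refine piece e5 (fun θ hθ => ?_)
    obtain ⟨hθ1, hθ2⟩ := hθ
    have hc : Real.cos θ < 0 :=
      Real.cos_neg_of_pi_div_two_lt_of_lt (by linarith) (by linarith)
    have hs : Real.sin (θ + α) < 0 := by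
      have h' : 0 < Real.sin (θ + α - π) :=
        Real.sin_pos_of_pos_of_lt_pi (by linarith) (by linarith)
      rw [Real.sin_sub_pi] at h'
      linarith
    exact Real.sign_of_pos (mul_pos_of_neg_of_neg hc hs)
  rw [split, p1, p2, p3, p4, p5]
  ring


lemma angular_alpha_full {α : ℝ} (h0 : -(π/2) ≤ α) (h1 : α ≤ π/2) :
    ∫ θ in (-π)..π, Real.sign (Real.cos θ * Real.sin (θ + α)) = 4 * α := by
  rcases le_or_gt 0 α with h | h
  · exact angular_alpha h h1
  · have key : ∀ x : ℝ, Real.sign (Real.cos x * Real.sin (x + α))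
        = -(fun θ => Real.sign (Real.cos θ * Real.sin (θ + (-α)))) (-x) := by
      intro x
      simp only
      rw [Real.cos_neg, show -x + -α = -(x+α) by ring, Real.sin_neg, mul_neg, Real.sign_neg, neg_neg]
    calc ∫ θ in (-π)..π, Real.sign (Real.cos θ * Real.sin (θ + α))
        = ∫ θ in (-π)..π, -(fun θ => Real.sign (Real.cos θ * Real.sin (θ + (-α)))) (-θ) := by
          simp_rw [key]
      _ = -∫ θ in (-π)..π, (fun θ => Real.sign (Real.cos θ * Real.sin (θ + (-α)))) (-θ) :=
          intervalIntegral.integral_neg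
      _ = -∫ θ in (-π)..π, Real.sign (Real.cos θ * Real.sin (θ + (-α))) := by
          rw [intervalIntegral.integral_comp_neg (fun θ => Real.sign (Real.cos θ * Real.sin (θ + (-α))))]
          norm_num
      _ = 4 * α := by
          rw [angular_alpha (by linarith) (by linarith)]
          ring


lemma angular_integral {ρ : ℝ} (hρ : ρ ∈ Set.Icc (-1 : ℝ) 1) :
    ∫ θ in Set.Ioo (-π) π,
        Real.sign (Real.cos θ * (ρ * Real.cos θ + Real.sqrt (1 - ρ^2) * Real.sin θ))
      = 4 * Real.arcsin ρ := by
  have hpt : ∀ θ : ℝ, ρ * Real.cos θ + Real.sqrt (1 - ρ^2) * Real.sin θ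
      = Real.sin (θ + Real.arcsin ρ) := by
    intro θ
    rw [Real.sin_add, ← Real.cos_arcsin, Real.sin_arcsin hρ.1 hρ.2]
    ring
  simp_rw [hpt]
  rw [← MeasureTheory.integral_Ioc_eq_integral_Ioo,
    ← intervalIntegral.integral_of_le (by linarith [Real.pi_pos])]
  exact angular_alpha_full (Real.neg_pi_div_two_le_arcsin ρ) (Real.arcsin_le_pi_div_two ρ)

lemma radial_integral : ∫ r in Set.Ioi (0:ℝ), r * Real.exp (-r^2 / 2) = 1 := by
  have hderiv : ∀ r ∈ Set.Ici (0:ℝ), HasDerivAt (fun r : ℝ => -Real.exp (-r^2/2))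
      (r * Real.exp (-r^2/2)) r := by
    intro r _
    have h1 : HasDerivAt (fun r : ℝ => -r^2/2) (-r) r := by
      have := ((hasDerivAt_pow 2 r).neg).div_const 2
      simpa using this.congr_deriv (by ring)
    have := (h1.exp).neg
    exact this.congr_deriv (by ring)
  have hint : IntegrableOn (fun r : ℝ => r * Real.exp (-r^2/2)) (Set.Ioi 0) := by
    have := integrable_mul_exp_neg_mul_sq (b := 1/2) (by norm_num)
    have h2 : (fun r : ℝ => r * Real.exp (-r^2/2)) = fun x : ℝ => x * Real.exp (-(1/2) * x^2) := by
      funext x; ring_nf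
    rw [h2]
    exact this.integrableOn
  have htend : Filter.Tendsto (fun r : ℝ => -Real.exp (-r^2/2)) Filter.atTop (nhds 0) := by
    rw [← neg_zero]
    apply Filter.Tendsto.neg
    apply Real.tendsto_exp_atBot.comp
    have h1 : Filter.Tendsto (fun r : ℝ => r^2) Filter.atTop Filter.atTop :=
      Filter.tendsto_pow_atTop two_ne_zero
    have h2 : Filter.Tendsto (fun r : ℝ => -r^2) Filter.atTop Filter.atBot :=
      Filter.tendsto_neg_atBot_iff.mpr h1
    exact h2.atBot_div_const (by norm_num)
  have := MeasureTheory.integral_Ioi_of_hasDerivAt_of_tendsto' hderiv hint htend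
  simp at this
  rw [this]

lemma pdfR_mul (x y : ℝ) : gaussianPDFReal 0 1 x * gaussianPDFReal 0 1 y
    = (2 * π)⁻¹ * Real.exp (-(x^2 + y^2) / 2) := by
  simp only [gaussianPDFReal]
  push_cast
  rw [mul_mul_mul_comm, ← Real.exp_add, ← mul_inv, Real.mul_self_sqrt (by positivity)]
  congr 1
  · norm_num
  · congr 1
    ring


lemma key_integral {ρ : ℝ} (hρ : ρ ∈ Set.Icc (-1 : ℝ) 1) :
    ∫ p : ℝ × ℝ, Real.sign (p.1 * (ρ * p.1 + Real.sqrt (1 - ρ^2) * p.2))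
        ∂((gaussianReal 0 1).prod (gaussianReal 0 1))
      = (2 / π) * Real.arcsin ρ := by
  set s : ℝ := Real.sqrt (1 - ρ^2) with hs
  set f : ℝ × ℝ → ℝ := fun p => Real.sign (p.1 * (ρ * p.1 + s * p.2)) with hfdef
  have hfm : Measurable f :=
    measurable_sign.comp (measurable_fst.mul
      ((measurable_fst.const_mul ρ).add (measurable_snd.const_mul s)))
  set nn : ℝ → ℝ≥0 := fun x => (gaussianPDFReal 0 1 x).toNNReal with hnn
  have hnnm : Measurable nn := (measurable_gaussianPDFReal 0 1).real_toNNReal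
  have hnncoe : ∀ x, (nn x : ℝ) = gaussianPDFReal 0 1 x := fun x =>
    Real.coe_toNNReal _ (gaussianPDFReal_nonneg 0 1 x)
  have hG : gaussianReal 0 1 = volume.withDensity (fun x => (nn x : ℝ≥0∞)) := by
    rw [gaussianReal_of_var_ne_zero 0 one_ne_zero]
    congr 1
  have hIntf : Integrable f ((gaussianReal 0 1).prod (gaussianReal 0 1)) := by
    refine Integrable.mono' (g := fun _ => (1:ℝ)) (integrable_const 1)
      hfm.aestronglyMeasurable ?_
    filter_upwards with p using abs_sign_le _
  have hIntF : Integrable (fun z : ℝ × ℝ =>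
      gaussianPDFReal 0 1 z.1 * gaussianPDFReal 0 1 z.2 * f z) (volume.prod volume) := by
    refine Integrable.mono' (g := fun z : ℝ × ℝ =>
        gaussianPDFReal 0 1 z.1 * gaussianPDFReal 0 1 z.2)
      (Integrable.mul_prod (integrable_gaussianPDFReal 0 1) (integrable_gaussianPDFReal 0 1))
      (((((measurable_gaussianPDFReal 0 1).comp measurable_fst).mul
        ((measurable_gaussianPDFReal 0 1).comp measurable_snd)).mul hfm).aestronglyMeasurable) ?_
    filter_upwards with z
    rw [Real.norm_eq_abs, abs_mul]
    nth_rewrite 2 [show gaussianPDFReal 0 1 z.1 * gaussianPDFReal 0 1 z.2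
      = |gaussianPDFReal 0 1 z.1 * gaussianPDFReal 0 1 z.2| * 1 by
        rw [abs_of_nonneg (mul_nonneg (gaussianPDFReal_nonneg 0 1 z.1)
          (gaussianPDFReal_nonneg 0 1 z.2)), mul_one]]
    exact mul_le_mul_of_nonneg_left (abs_sign_le _) (abs_nonneg _)
  have K1 : ∫ p, f p ∂((gaussianReal 0 1).prod (gaussianReal 0 1))
      = ∫ p : ℝ × ℝ, gaussianPDFReal 0 1 p.1 * gaussianPDFReal 0 1 p.2 * f p ∂volume := by
    rw [integral_prod f hIntf]
    have inner : ∀ x, ∫ y, f (x, y) ∂(gaussianReal 0 1)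
        = ∫ y, (nn y : ℝ) * f (x, y) ∂volume := by
      intro x
      rw [hG, integral_withDensity_eq_integral_smul hnnm]
      simp_rw [NNReal.smul_def, smul_eq_mul]
    simp_rw [inner]
    rw [hG, integral_withDensity_eq_integral_smul hnnm]
    simp_rw [NNReal.smul_def, smul_eq_mul, ← MeasureTheory.integral_const_mul]
    have huncurry : (Function.uncurry fun x y => (nn x : ℝ) * ((nn y : ℝ) * f (x, y)))
        = fun z : ℝ × ℝ => gaussianPDFReal 0 1 z.1 * gaussianPDFReal 0 1 z.2 * f z := by
      funext z
      simp only [Function.uncurry]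
      rw [hnncoe, hnncoe]
      ring
    have hIntF' : Integrable (Function.uncurry fun x y => (nn x : ℝ) * ((nn y : ℝ) * f (x, y)))
        (volume.prod volume) := by
      rw [huncurry]; exact hIntF
    rw [Measure.volume_eq_prod]
    calc ∫ x : ℝ, ∫ y : ℝ, (nn x : ℝ) * ((nn y : ℝ) * f (x, y))
        = ∫ z : ℝ × ℝ, (nn z.1 : ℝ) * ((nn z.2 : ℝ) * f z) ∂(volume.prod volume) :=
          integral_integral hIntF'
      _ = ∫ p : ℝ × ℝ, gaussianPDFReal 0 1 p.1 * gaussianPDFReal 0 1 p.2 * f p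
            ∂(volume.prod volume) :=
          integral_congr_ae (Filter.Eventually.of_forall fun z => by
            simp only
            rw [hnncoe, hnncoe]; ring)
  rw [K1]
  -- polar coordinates
  rw [← integral_comp_polarCoord_symm]
  have htarget : polarCoord.target = Set.Ioi (0:ℝ) ×ˢ Set.Ioo (-π) π := rfl
  have hEq : Set.EqOn
      (fun p : ℝ × ℝ => p.1 • (gaussianPDFReal 0 1 (polarCoord.symm p).1
        * gaussianPDFReal 0 1 (polarCoord.symm p).2 * f (polarCoord.symm p)))
      (fun p : ℝ × ℝ => (p.1 * Real.exp (-p.1^2/2)) *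
        ((2 * π)⁻¹ * Real.sign (Real.cos p.2 * (ρ * Real.cos p.2 + s * Real.sin p.2))))
      polarCoord.target := by
    intro p hp
    rw [htarget] at hp
    obtain ⟨hr, -⟩ := hp
    simp only [Set.mem_Ioi] at hr
    have hsymm : polarCoord.symm p = (p.1 * Real.cos p.2, p.1 * Real.sin p.2) := rfl
    simp only [hsymm, hfdef]
    rw [pdfR_mul]
    have h1 : (p.1 * Real.cos p.2)^2 + (p.1 * Real.sin p.2)^2 = p.1^2 := by
      have := Real.sin_sq_add_cos_sq p.2
      nlinarith [this]
    rw [h1]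
    have h2 : p.1 * Real.cos p.2 * (ρ * (p.1 * Real.cos p.2) + s * (p.1 * Real.sin p.2))
        = p.1^2 * (Real.cos p.2 * (ρ * Real.cos p.2 + s * Real.sin p.2)) := by ring
    rw [h2, sign_pos_mul (pow_pos hr 2)]
    simp only [smul_eq_mul]
    ring
  rw [MeasureTheory.setIntegral_congr_fun (polarCoord.open_target.measurableSet) hEq, htarget,
    Measure.volume_eq_prod, ← Measure.prod_restrict]
  have hfin : (∫ x : ℝ × ℝ, (x.1 * Real.exp (-x.1^2/2)) *
        ((2*π)⁻¹ * Real.sign (Real.cos x.2 * (ρ * Real.cos x.2 + s * Real.sin x.2)))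
        ∂((volume.restrict (Set.Ioi 0)).prod (volume.restrict (Set.Ioo (-π) π))))
      = (∫ r in Set.Ioi (0:ℝ), r * Real.exp (-r^2/2)) *
        ∫ θ in Set.Ioo (-π) π,
          (2*π)⁻¹ * Real.sign (Real.cos θ * (ρ * Real.cos θ + s * Real.sin θ)) :=
    MeasureTheory.integral_prod_mul (f := fun r : ℝ => r * Real.exp (-r^2/2))
      (g := fun θ : ℝ => (2*π)⁻¹ * Real.sign (Real.cos θ * (ρ * Real.cos θ + s * Real.sin θ)))
  rw [hfin, radial_integral, one_mul, MeasureTheory.integral_const_mul, hs, angular_integral hρ]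
  have hπ : (π : ℝ) ≠ 0 := Real.pi_ne_zero
  field_simp
  ring

end KendallAux

open KendallAux

/-- Kendall's tau of a bivariate Gaussian with correlation `ρ` is `(2/π) arcsin ρ`.
The bivariate Gaussian pair `(Z₁, Z₂)` with standard normal marginals and correlation `ρ` is
realized as `Z₁ = W₀`, `Z₂ = ρ W₀ + √(1−ρ²) W₁`, and an independent copy `(Z₁', Z₂')` via
`(W₂, W₃)`, where `W₀, W₁, W₂, W₃` are i.i.d. standard normal. -/
theorem stmt4 {Ω : Type*} [MeasurableSpace Ω] (μ : Measure Ω) [IsProbabilityMeasure μ]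
    (W : Fin 4 → Ω → ℝ) (hmeas : ∀ i, Measurable (W i))
    (hindep : iIndepFun W μ)
    (hlaw : ∀ i, μ.map (W i) = gaussianReal 0 1)
    (ρ : ℝ) (hρ : ρ ∈ Set.Icc (-1 : ℝ) 1) :
    ∫ ω, Real.sign ((W 0 ω - W 2 ω) *
        ((ρ * W 0 ω + Real.sqrt (1 - ρ ^ 2) * W 1 ω)
          - (ρ * W 2 ω + Real.sqrt (1 - ρ ^ 2) * W 3 ω))) ∂μ
      = (2 / Real.pi) * Real.arcsin ρ := by
  set s : ℝ := Real.sqrt (1 - ρ^2) with hs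
  set U : Ω → ℝ := fun ω => W 0 ω - W 2 ω with hU
  set V : Ω → ℝ := fun ω => W 1 ω - W 3 ω with hV
  have hUm : Measurable U := (hmeas 0).sub (hmeas 2)
  have hVm : Measurable V := (hmeas 1).sub (hmeas 3)
  have hUV : IndepFun U V μ := by
    have := hindep.indepFun_prodMk_prodMk hmeas 0 2 1 3
      (by decide) (by decide) (by decide) (by decide)
    exact this.comp (measurable_fst.sub measurable_snd) (measurable_fst.sub measurable_snd)
  have hUlaw : μ.map U = gaussianReal 0 2 :=
    map_sub_gaussian μ (hmeas 0) (hmeas 2) (hindep.indepFun (by decide)) (hlaw 0) (hlaw 2)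
  have hVlaw : μ.map V = gaussianReal 0 2 :=
    map_sub_gaussian μ (hmeas 1) (hmeas 3) (hindep.indepFun (by decide)) (hlaw 1) (hlaw 3)
  have hpair : μ.map (fun ω => (U ω, V ω)) = (gaussianReal 0 2).prod (gaussianReal 0 2) := by
    rw [(indepFun_iff_map_prod_eq_prod_map_map hUm.aemeasurable hVm.aemeasurable).mp hUV,
      hUlaw, hVlaw]
  have hintg : (fun ω => Real.sign ((W 0 ω - W 2 ω) *
      ((ρ * W 0 ω + s * W 1 ω) - (ρ * W 2 ω + s * W 3 ω))))
      = fun ω => Real.sign (U ω * (ρ * U ω + s * V ω)) := by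
    funext ω
    simp only [hU, hV]
    congr 1
    ring
  rw [hintg]
  have hfm : Measurable (fun p : ℝ × ℝ => Real.sign (p.1 * (ρ * p.1 + s * p.2))) :=
    measurable_sign.comp (measurable_fst.mul
      ((measurable_fst.const_mul ρ).add (measurable_snd.const_mul s)))
  have step1 : ∫ ω, Real.sign (U ω * (ρ * U ω + s * V ω)) ∂μ
      = ∫ p : ℝ × ℝ, Real.sign (p.1 * (ρ * p.1 + s * p.2))
          ∂((gaussianReal 0 2).prod (gaussianReal 0 2)) := by
    rw [← hpair, integral_map (hUm.prodMk hVm).aemeasurable hfm.aestronglyMeasurable]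
  rw [step1]
  have h2 : (gaussianReal 0 1).map (fun x : ℝ => Real.sqrt 2 * x) = gaussianReal 0 2 := by
    have := gaussianReal_map_const_mul (μ := 0) (v := 1) (Real.sqrt 2)
    rw [show ((Real.sqrt 2) * · ) = (fun x : ℝ => Real.sqrt 2 * x) from rfl] at this
    rw [this]
    congr 1
    · ring
    · apply NNReal.coe_injective
      push_cast
      rw [Real.sq_sqrt (by norm_num)]
      norm_num
  have hprodmap : (gaussianReal 0 2).prod (gaussianReal 0 2)
      = ((gaussianReal 0 1).prod (gaussianReal 0 1)).map
          (Prod.map (fun x : ℝ => Real.sqrt 2 * x) (fun x : ℝ => Real.sqrt 2 * x)) := by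
    rw [← h2, Measure.map_prod_map _ _ (measurable_const_mul _) (measurable_const_mul _)]
  rw [hprodmap, integral_map (Measurable.aemeasurable (by fun_prop)) hfm.aestronglyMeasurable]
  have h22 : (Real.sqrt 2 : ℝ) * Real.sqrt 2 = 2 := Real.mul_self_sqrt (by norm_num)
  have hptw : ∀ p : ℝ × ℝ, Real.sqrt 2 * p.1 * (ρ * (Real.sqrt 2 * p.1) + s * (Real.sqrt 2 * p.2))
      = 2 * (p.1 * (ρ * p.1 + s * p.2)) := by
    intro p
    linear_combination (p.1 * (ρ * p.1 + s * p.2)) * h22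
  have hfin : (fun p : ℝ × ℝ => Real.sign ((Prod.map (fun x : ℝ => Real.sqrt 2 * x)
        (fun x : ℝ => Real.sqrt 2 * x) p).1 *
        (ρ * (Prod.map (fun x : ℝ => Real.sqrt 2 * x) (fun x : ℝ => Real.sqrt 2 * x) p).1
          + s * (Prod.map (fun x : ℝ => Real.sqrt 2 * x)
              (fun x : ℝ => Real.sqrt 2 * x) p).2)))
      = fun p : ℝ × ℝ => Real.sign (p.1 * (ρ * p.1 + s * p.2)) := by
    funext p
    simp only [Prod.map_fst, Prod.map_snd]
    rw [hptw p, sign_pos_mul (by norm_num : (0:ℝ) < 2)]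
  rw [hfin, hs]
  exact key_integral hρ
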